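/- Let n ≥ 1, p, q ∈ (0,∞], ξ⁰ ∈ ℝⁿ, and ε > 0. Let κ ∈ C_0^∞(ℝⁿ) satisfy: for all ξ with |ξ| < 2ε, κ(ξ) = 1 and κ(ξ−μ) = 0 for every μ ∈ ℤⁿ∖{0}. Let θ ∈ C_0^∞(ℝⁿ) with supp θ ⊂ {ξ : |ξ−ξ⁰| < ε}. Let b ∈ X(ℤⁿ) and define the Schwartz function f by f̂(ξ) = Σ_{ν∈ℤⁿ} b(ν) θ(ξ−ν). Then for every μ ∈ ℤⁿ, κ(D−ξ⁰−μ) f(x) = b(μ) e^{2πi μ·x} (𝓕⁻¹θ)(x), and consequently ‖ ‖κ(D−ξ⁰−μ) f(x)‖_{ℓ^q_μ(ℤⁿ)} ‖_{L^p_x(ℝⁿ)} = ‖b‖_{ℓ^q(ℤⁿ)} ‖𝓕⁻¹θ‖_{L^p(ℝⁿ)}. -/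

import Mathlib

open MeasureTheory Real Set
open scoped ENNReal NNReal

noncomputable section

namespace LatticeBump

/-- ℝⁿ as a Euclidean space. -/
abbrev En (n : ℕ) := EuclideanSpace ℝ (Fin n)

/-- ℤⁿ. -/
abbrev Zn (n : ℕ) := Fin n → ℤ

/-- The lattice point `k ∈ ℤⁿ` viewed as a point of ℝⁿ. -/
def intVec {n : ℕ} (k : Zn n) : En n := WithLp.toLp 2 (fun i => (k i : ℝ))

/-- `e^{2πit}`. -/
def e2πi (t : ℝ) : ℂ := Complex.exp (2 * Real.pi * t * Complex.I)

/-- The dot product on ℝⁿ. -/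
def dotE {n : ℕ} (x ξ : En n) : ℝ := ∑ i, x i * ξ i

/-- Fourier transform `f̂(ξ) = ∫ f(x) e^{-2πi x·ξ} dx`. -/
def FT {n : ℕ} (f : En n → ℂ) (ξ : En n) : ℂ := ∫ x, e2πi (-(dotE x ξ)) * f x

/-- Inverse Fourier transform. -/
def invFT {n : ℕ} (f : En n → ℂ) (x : En n) : ℂ := ∫ ξ, e2πi (dotE x ξ) * f ξ

/-- The bilinear Fourier multiplier operator `T_σ`. -/
def Tbil {n : ℕ} (σ : En n × En n → ℂ) (f₁ f₂ : En n → ℂ) (x : En n) : ℂ :=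
  ∫ ξ : En n × En n, e2πi (dotE x (ξ.1 + ξ.2)) * σ ξ * FT f₁ ξ.1 * FT f₂ ξ.2

/-- The lattice bump multiplier `σ_{a,Φ}`. -/
def latticeSymbol {n : ℕ} (a : Zn n × Zn n → ℂ) (Φ : En n × En n → ℂ)
    (ξ : En n × En n) : ℂ :=
  ∑' μ : Zn n × Zn n, a μ * Φ (ξ.1 - intVec μ.1, ξ.2 - intVec μ.2)

/-- ℓ^q norm (`q ∈ (0,∞]`) of an ℝ≥0∞-valued family. -/
def lqNorm {ι : Type*} (q : ℝ≥0∞) (u : ι → ℝ≥0∞) : ℝ≥0∞ :=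
  if q = ∞ then ⨆ i, u i else (∑' i, u i ^ q.toReal) ^ (1 / q.toReal)

/-- L^p norm (`p ∈ (0,∞]`) of an ℝ≥0∞-valued function. -/
def LpNormE {α : Type*} [MeasurableSpace α] (p : ℝ≥0∞) (μ : Measure α)
    (u : α → ℝ≥0∞) : ℝ≥0∞ :=
  if p = ∞ then essSup u μ else (∫⁻ x, u x ^ p.toReal ∂μ) ^ (1 / p.toReal)

/-- The unit cube `Q = (-1/2, 1/2]ⁿ`. -/
def unitCube (n : ℕ) : Set (En n) := {x | ∀ i, x i ∈ Set.Ioc (-(1:ℝ)/2) (1/2)}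

/-- The shifted cube `k + Q`. -/
def shiftedCube {n : ℕ} (k : Zn n) : Set (En n) :=
  {x | ∀ i, x i - (k i : ℝ) ∈ Set.Ioc (-(1:ℝ)/2) (1/2)}

/-- The amalgam space quasi-norm `‖f‖_{(L^p, ℓ^q)}`. -/
def amalgamNorm {n : ℕ} (p q : ℝ≥0∞) (f : En n → ℂ) : ℝ≥0∞ :=
  lqNorm q (fun k : Zn n => eLpNorm f p (volume.restrict (shiftedCube k)))

/-- Operator quasi-norm of `T_σ` between amalgam spaces (∞ if unbounded). -/
def amalgamOpNorm {n : ℕ} (σ : En n × En n → ℂ) (p₁ p₂ p q₁ q₂ q : ℝ≥0∞) : ℝ≥0∞ :=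
  sInf {C : ℝ≥0∞ | ∀ f₁ f₂ : SchwartzMap (En n) ℂ,
    amalgamNorm p q (Tbil σ ⇑f₁ ⇑f₂) ≤ C * amalgamNorm p₁ q₁ ⇑f₁ * amalgamNorm p₂ q₂ ⇑f₂}

/-- A smooth function on the torus 𝕋ⁿ, identified with a smooth 1-periodic function on ℝⁿ. -/
def IsSmoothPeriodic {n : ℕ} (F : En n → ℂ) : Prop :=
  ContDiff ℝ (⊤ : ℕ∞) F ∧ ∀ (x : En n) (k : Zn n), F (x + intVec k) = F x

/-- Fourier coefficient of a periodic function. -/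
def perCoeff {n : ℕ} (F : En n → ℂ) (μ : Zn n) : ℂ :=
  ∫ x in unitCube n, e2πi (-(dotE (intVec μ) x)) * F x

/-- The periodic bilinear Fourier multiplier operator `T^per_a`. -/
def Tper {n : ℕ} (a : Zn n × Zn n → ℂ) (F₁ F₂ : En n → ℂ) (x : En n) : ℂ :=
  ∑' μ : Zn n × Zn n,
    e2πi (dotE x (intVec μ.1 + intVec μ.2)) * a μ * perCoeff F₁ μ.1 * perCoeff F₂ μ.2

/-- `L^p(𝕋ⁿ)` quasi-norm (over the fundamental domain Q). -/
def perLp {n : ℕ} (p : ℝ≥0∞) (F : En n → ℂ) : ℝ≥0∞ :=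
  eLpNorm F p (volume.restrict (unitCube n))

/-- `‖T^per_a‖_{L^{p₁}×L^{p₂}→L^p}`. -/
def perOpNorm {n : ℕ} (a : Zn n × Zn n → ℂ) (p₁ p₂ p : ℝ≥0∞) : ℝ≥0∞ :=
  ⨆ (F₁ : {F : En n → ℂ // IsSmoothPeriodic F ∧ F ≠ 0})
    (F₂ : {F : En n → ℂ // IsSmoothPeriodic F ∧ F ≠ 0}),
      perLp p (Tper a F₁.1 F₂.1) / (perLp p₁ F₁.1 * perLp p₂ F₂.1)

/-- Condition (B). -/
def CondB {n : ℕ} (Φ : En n × En n → ℂ) : Prop :=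
  ∃ ξ0 : En n × En n, Φ ξ0 ≠ 0 ∧
    ∀ μ : Zn n × Zn n, μ ≠ 0 →
      ξ0 ∉ tsupport (fun ξ : En n × En n => Φ (ξ.1 - intVec μ.1, ξ.2 - intVec μ.2))

/-- `a ∈ ℓ^∞`. -/
def BddSeq {ι : Type*} (a : ι → ℂ) : Prop := ∃ M : ℝ, ∀ i, ‖a i‖ ≤ M

/-- The Fourier multiplier operator `m(D)` realized as convolution with `𝓕⁻¹m`. -/
def mulOp {n : ℕ} (m : En n → ℂ) (g : En n → ℂ) (x : En n) : ℂ :=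
  ∫ y, invFT m (x - y) * g y

/-- The Wiener amalgam quasi-norm `‖g‖_{W^{p,q}}` associated with the window `κ`. -/
def wienerNorm {n : ℕ} (κ : En n → ℂ) (p q : ℝ≥0∞) (g : En n → ℂ) : ℝ≥0∞ :=
  LpNormE p volume (fun x =>
    lqNorm q (fun k : Zn n => (‖mulOp (fun ξ => κ (ξ - intVec k)) g x‖₊ : ℝ≥0∞)))

/-- An admissible window for Wiener amalgam spaces:
`κ ∈ C_0^∞` with `|∑_k κ(ξ-k)| ≥ 1`. -/
def AdmissibleWindow {n : ℕ} (κ : En n → ℂ) : Prop :=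
  ContDiff ℝ (⊤ : ℕ∞) κ ∧ HasCompactSupport κ ∧
    ∀ ξ : En n, 1 ≤ ‖∑' k : Zn n, κ (ξ - intVec k)‖

/-- Operator quasi-norm of `T_σ` between Wiener amalgam spaces. -/
def wienerOpNorm {n : ℕ} (κ : En n → ℂ) (σ : En n × En n → ℂ)
    (p₁ p₂ p q₁ q₂ q : ℝ≥0∞) : ℝ≥0∞ :=
  sInf {C : ℝ≥0∞ | ∀ f₁ f₂ : SchwartzMap (En n) ℂ,
    wienerNorm κ p q (Tbil σ ⇑f₁ ⇑f₂)
      ≤ C * wienerNorm κ p₁ q₁ ⇑f₁ * wienerNorm κ p₂ q₂ ⇑f₂}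

/-- The discrete bilinear operator `S_a`. -/
def Sa {n : ℕ} (a : Zn n × Zn n → ℂ) (b₁ b₂ : Zn n → ℂ) (μ : Zn n) : ℂ :=
  ∑' ν : Zn n, a (ν, μ - ν) * b₁ ν * b₂ (μ - ν)

/-- ℓ^q quasi-norm of a complex sequence on ℤⁿ. -/
def seqLq {n : ℕ} (q : ℝ≥0∞) (b : Zn n → ℂ) : ℝ≥0∞ :=
  lqNorm q (fun μ => (‖b μ‖₊ : ℝ≥0∞))

/-- `‖S_a‖_{ℓ^{q₁}×ℓ^{q₂}→ℓ^q}`: supremum over nonzero finitely supported sequences. -/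
def SaOpNorm {n : ℕ} (a : Zn n × Zn n → ℂ) (q₁ q₂ q : ℝ≥0∞) : ℝ≥0∞ :=
  ⨆ (b₁ : {b : Zn n → ℂ // (Function.support b).Finite ∧ b ≠ 0})
    (b₂ : {b : Zn n → ℂ // (Function.support b).Finite ∧ b ≠ 0}),
      seqLq q (Sa a b₁.1 b₂.1) / (seqLq q₁ b₁.1 * seqLq q₂ b₂.1)



/-! ### Auxiliary lemmas -/

open scoped FourierTransform

section Aux

variable {n : ℕ}

lemma e2πi_eq (t : ℝ) : e2πi t = Complex.exp (((2 * π * t : ℝ) : ℂ) * Complex.I) := by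
  unfold e2πi; push_cast; ring_nf

lemma e2πi_add (s t : ℝ) : e2πi (s + t) = e2πi s * e2πi t := by
  unfold e2πi; rw [← Complex.exp_add]; push_cast; ring_nf

lemma norm_e2πi (t : ℝ) : ‖e2πi t‖ = 1 := by
  rw [e2πi_eq]; simpa using Complex.norm_exp_ofReal_mul_I (2 * π * t)

lemma nnnorm_e2πi (t : ℝ) : ‖e2πi t‖₊ = 1 :=
  NNReal.coe_injective (by rw [coe_nnnorm, norm_e2πi, NNReal.coe_one])

lemma continuous_e2πi : Continuous e2πi := by
  unfold e2πi; fun_prop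

lemma dotE_eq_inner (x ξ : En n) : dotE x ξ = (inner ℝ x ξ : ℝ) := by
  simp [dotE, PiLp.inner_apply, RCLike.inner_apply, conj_trivial, mul_comm]

lemma dotE_comm (x ξ : En n) : dotE x ξ = dotE ξ x := by
  simp [dotE, mul_comm]

lemma dotE_sub_left (x y ξ : En n) : dotE (x - y) ξ = dotE x ξ - dotE y ξ := by
  simp [dotE, sub_mul, Finset.sum_sub_distrib]

lemma dotE_sub_right (x a b : En n) : dotE x (a - b) = dotE x a - dotE x b := by
  simp [dotE, mul_sub, Finset.sum_sub_distrib]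

lemma continuous_dotE : Continuous (fun p : En n × En n => dotE p.1 p.2) := by
  unfold dotE
  exact continuous_finset_sum _ fun i _ =>
    by fun_prop

lemma intVec_sub (μ ν : Zn n) : intVec (μ - ν) = intVec μ - intVec ν := by
  ext i
  simp [intVec]

lemma invFT_eq (f : En n → ℂ) : invFT f = 𝓕⁻ f := by
  ext x
  rw [invFT, Real.fourierInv_eq']
  congr 1; ext ξ
  rw [smul_eq_mul, e2πi_eq, dotE_eq_inner, real_inner_comm]

lemma FT_eq (f : En n → ℂ) : FT f = 𝓕 f := by
  ext ξ
  rw [FT, Real.fourier_eq']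
  congr 1; ext x
  rw [smul_eq_mul, e2πi_eq, dotE_eq_inner]
  norm_num

/-- A smooth compactly supported function, as a Schwartz map. -/
def toSchwartz (g : En n → ℂ) (hsm : ContDiff ℝ (⊤ : ℕ∞) g) (hc : HasCompactSupport g) :
    SchwartzMap (En n) ℂ where
  toFun := g
  smooth' := hsm
  decay' := by
    intro k m
    have hcont : Continuous fun x : En n => ‖x‖ ^ k * ‖iteratedFDeriv ℝ m g x‖ :=
      (continuous_norm.pow k).mul
        (hsm.continuous_iteratedFDeriv (by exact_mod_cast le_top)).norm
    have hsupp : HasCompactSupport fun x : En n => ‖x‖ ^ k * ‖iteratedFDeriv ℝ m g x‖ := by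
      apply HasCompactSupport.mul_left
      exact (hc.iteratedFDeriv m).norm
    obtain ⟨C, hC⟩ := hcont.bounded_above_of_compact_support hsupp
    exact ⟨C, fun x => (le_abs_self _).trans (hC x)⟩

lemma toSchwartz_coe (g : En n → ℂ) (hsm : ContDiff ℝ (⊤ : ℕ∞) g) (hc : HasCompactSupport g) :
    ⇑(toSchwartz g hsm hc) = g := rfl

lemma FT_invFT (g : En n → ℂ) (hsm : ContDiff ℝ (⊤ : ℕ∞) g) (hc : HasCompactSupport g) :
    FT (invFT g) = g := by
  rw [FT_eq, invFT_eq]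
  have h1 : Integrable g := hsm.continuous.integrable_of_hasCompactSupport hc
  have h2 : Integrable (𝓕 g) := by
    have := (SchwartzMap.fourierTransformCLM ℂ (toSchwartz g hsm hc)).integrable (μ := volume)
    rwa [SchwartzMap.fourierTransformCLM_apply, SchwartzMap.fourier_coe, toSchwartz_coe] at this
  exact hsm.continuous.fourier_fourierInv_eq h1 h2

lemma invFT_coe_schwartz (g : En n → ℂ) (hsm : ContDiff ℝ (⊤ : ℕ∞) g) (hc : HasCompactSupport g) :
    invFT g = ⇑((SchwartzMap.fourierTransformCLE ℂ (SchwartzMap (En n) ℂ)).symm (toSchwartz g hsm hc)) := by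
  rw [invFT_eq]; show _ = ⇑(𝓕⁻ (toSchwartz g hsm hc) : SchwartzMap (En n) ℂ); rw [SchwartzMap.fourierInv_coe, toSchwartz_coe]

lemma invFT_translate (g : En n → ℂ) (v : En n) (x : En n) :
    invFT (fun ξ => g (ξ - v)) x = e2πi (dotE x v) * invFT g x := by
  have key : ∀ ξ : En n, e2πi (dotE x ξ) * g (ξ - v)
      = e2πi (dotE x v) * ((fun η => e2πi (dotE x η) * g η) (ξ - v)) := by
    intro ξ
    simp only
    rw [← mul_assoc, ← e2πi_add, dotE_sub_right]
    ring_nf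
  rw [invFT]
  simp_rw [key]
  rw [integral_const_mul, integral_sub_right_eq_self (fun η => e2πi (dotE x η) * g η) v]
  rfl

lemma conv_key (m h : En n → ℂ) (hmc : Continuous m) (hms : HasCompactSupport m)
    (hhsm : ContDiff ℝ (⊤ : ℕ∞) h) (hhs : HasCompactSupport h) (x : En n) :
    ∫ y, invFT m (x - y) * invFT h y = invFT (fun ξ => m ξ * h ξ) x := by
  have hm_int : Integrable m := hmc.integrable_of_hasCompactSupport hms
  have hHcoe : invFT h = ⇑((SchwartzMap.fourierTransformCLE ℂ (SchwartzMap (En n) ℂ)).symm (toSchwartz h hhsm hhs)) :=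
    invFT_coe_schwartz h hhsm hhs
  have hH_int : Integrable (invFT h) := by rw [hHcoe]; exact SchwartzMap.integrable _
  have hH_cont : Continuous (invFT h) := by rw [hHcoe]; exact SchwartzMap.continuous _
  have hem_int : Integrable (fun ξ => e2πi (dotE x ξ) * m ξ) := by
    apply hm_int.bdd_mul
    · exact (continuous_e2πi.comp (continuous_dotE.comp
        (continuous_const.prodMk continuous_id))).aestronglyMeasurable
    · exact Filter.Eventually.of_forall fun ξ => le_of_eq (norm_e2πi _)
  set G : En n × En n → ℂ :=
    fun p => (e2πi (dotE x p.2) * m p.2) * (e2πi (-(dotE p.1 p.2)) * invFT h p.1) with hG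
  have hG_cont : Continuous G := by
    apply Continuous.mul
    · exact ((continuous_e2πi.comp (continuous_dotE.comp
        (continuous_const.prodMk continuous_snd))).mul (hmc.comp continuous_snd))
    · exact ((continuous_e2πi.comp continuous_dotE.neg).mul (hH_cont.comp continuous_fst))
  have hbound : Integrable (fun p : En n × En n =>
      ‖invFT h p.1‖ * ‖e2πi (dotE x p.2) * m p.2‖) (volume.prod volume) :=
    hH_int.norm.mul_prod hem_int.norm
  have hG_int : Integrable G (volume.prod volume) := by
    apply Integrable.mono' hbound hG_cont.aestronglyMeasurable
    filter_upwards with p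
    rw [hG]
    simp only [norm_mul, norm_e2πi, one_mul]
    rw [mul_comm]
  have step1 : ∀ y, invFT m (x - y) * invFT h y = ∫ ξ, G (y, ξ) := by
    intro y
    rw [invFT, ← integral_mul_const]
    congr 1; funext ξ
    rw [hG]
    simp only
    rw [dotE_sub_left, sub_eq_add_neg, e2πi_add]
    ring
  calc ∫ y, invFT m (x - y) * invFT h y
      = ∫ y, ∫ ξ, G (y, ξ) := by simp_rw [step1]
    _ = ∫ ξ, ∫ y, G (y, ξ) := integral_integral_swap hG_int
    _ = ∫ ξ, e2πi (dotE x ξ) * (m ξ * h ξ) := by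
        congr 1; funext ξ
        simp only [hG]
        rw [integral_const_mul]
        have h2 : (∫ y, e2πi (-(dotE y ξ)) * invFT h y) = FT (invFT h) ξ := rfl
        rw [h2, FT_invFT h hhsm hhs]
        ring
    _ = invFT (fun ξ => m ξ * h ξ) x := rfl

lemma shift_smooth (g : En n → ℂ) (hsm : ContDiff ℝ (⊤ : ℕ∞) g) (v : En n) :
    ContDiff ℝ (⊤ : ℕ∞) (fun ξ => g (ξ - v)) :=
  hsm.comp (contDiff_id.sub contDiff_const)

lemma shift_compact (g : En n → ℂ) (hc : HasCompactSupport g) (v : En n) :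
    HasCompactSupport (fun ξ => g (ξ - v)) :=
  hc.comp_isClosedEmbedding (Homeomorph.subRight v).isClosedEmbedding

lemma invFT_zero_fun (x : En n) : invFT (fun _ : En n => (0 : ℂ)) x = 0 := by
  simp [invFT]

lemma norm_invFT_le (g : En n → ℂ) (z : En n) : ‖invFT g z‖ ≤ ∫ ξ, ‖g ξ‖ := by
  rw [invFT]
  refine (norm_integral_le_integral_norm _).trans (le_of_eq ?_)
  congr 1; funext ξ
  rw [norm_mul, norm_e2πi, one_mul]

lemma lqNorm_mul_const (q : ℝ≥0∞) (hq : q ≠ 0) (u : Zn n → ℝ≥0∞) (c : ℝ≥0∞) :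
    lqNorm q (fun μ => u μ * c) = lqNorm q u * c := by
  unfold lqNorm
  by_cases hq' : q = ∞
  · simp only [if_pos hq']
    exact (ENNReal.iSup_mul u c).symm
  · simp only [if_neg hq']
    have hr : 0 < q.toReal := ENNReal.toReal_pos hq hq'
    simp_rw [ENNReal.mul_rpow_of_nonneg _ _ hr.le]
    rw [ENNReal.tsum_mul_right,
      ENNReal.mul_rpow_of_nonneg _ _ (by positivity : (0:ℝ) ≤ 1 / q.toReal)]
    congr 1
    rw [← ENNReal.rpow_mul, mul_one_div_cancel hr.ne', ENNReal.rpow_one]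

lemma seqLq_ne_top (q : ℝ≥0∞) (hq : q ≠ 0) (b : Zn n → ℂ)
    (hb : (Function.support b).Finite) : seqLq q b ≠ ∞ := by
  unfold seqLq lqNorm
  by_cases hq' : q = ∞
  · simp only [if_pos hq']
    refine ne_top_of_le_ne_top
      (ENNReal.coe_ne_top (r := hb.toFinset.sup fun ν => ‖b ν‖₊)) (iSup_le fun μ => ?_)
    by_cases hμ : μ ∈ hb.toFinset
    · exact ENNReal.coe_le_coe.mpr (Finset.le_sup (f := fun ν => ‖b ν‖₊) hμ)
    · have : b μ = 0 := by simpa [Function.mem_support] using hμ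
      simp [this]
  · simp only [if_neg hq']
    have hr : 0 < q.toReal := ENNReal.toReal_pos hq hq'
    apply (ENNReal.rpow_lt_top_of_nonneg (by positivity) ?_).ne
    rw [tsum_eq_sum (s := hb.toFinset) (fun μ hμ => by
      have : b μ = 0 := by simpa [Function.mem_support] using hμ
      simp [this, ENNReal.zero_rpow_of_pos hr])]
    exact (ENNReal.sum_lt_top.mpr fun μ _ =>
      ENNReal.rpow_lt_top_of_nonneg hr.le ENNReal.coe_ne_top).ne

lemma LpNormE_const_mul (p : ℝ≥0∞) (hp : p ≠ 0) (K : ℝ≥0∞) (hK : K ≠ ∞) (v : En n → ℝ≥0∞) :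
    LpNormE p volume (fun x => K * v x) = K * LpNormE p volume v := by
  unfold LpNormE
  by_cases hp' : p = ∞
  · simp only [if_pos hp']
    exact ENNReal.essSup_const_mul
  · simp only [if_neg hp']
    have hr : 0 < p.toReal := ENNReal.toReal_pos hp hp'
    simp_rw [ENNReal.mul_rpow_of_nonneg _ _ hr.le]
    rw [lintegral_const_mul' _ _ (ENNReal.rpow_lt_top_of_nonneg hr.le hK).ne,
      ENNReal.mul_rpow_of_nonneg _ _ (by positivity : (0:ℝ) ≤ 1 / p.toReal)]
    congr 1
    rw [← ENNReal.rpow_mul, mul_one_div_cancel hr.ne', ENNReal.rpow_one]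

lemma LpNormE_nnnorm_eq (p : ℝ≥0∞) (hp : p ≠ 0) (g : En n → ℂ) :
    LpNormE p volume (fun x => (‖g x‖₊ : ℝ≥0∞)) = eLpNorm g p volume := by
  unfold LpNormE
  by_cases hp' : p = ∞
  · simp only [if_pos hp']
    rw [hp', eLpNorm_exponent_top]
    rfl
  · simp only [if_neg hp']
    rw [eLpNorm_eq_eLpNorm' hp hp', eLpNorm']
    rfl

end Aux

/-- Frequency localization of `f` with `f̂(ξ) = Σ_ν b(ν) θ(ξ-ν)` (equivalently,
`f(x) = (Σ_ν b(ν) e^{2πi ν·x}) (𝓕⁻¹θ)(x)`), and the resulting Wiener amalgam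
norm identity. -/
theorem statement17 (n : ℕ) (hn : 1 ≤ n) (p q : ℝ≥0∞) (hp : 0 < p) (hq : 0 < q)
    (ξ0 : En n) (ε : ℝ) (hε : 0 < ε)
    (κ : En n → ℂ) (hκsm : ContDiff ℝ (⊤ : ℕ∞) κ) (hκc : HasCompactSupport κ)
    (hκ1 : ∀ ξ : En n, ‖ξ‖ < 2 * ε → κ ξ = 1)
    (hκ0 : ∀ ξ : En n, ‖ξ‖ < 2 * ε → ∀ μ : Zn n, μ ≠ 0 → κ (ξ - intVec μ) = 0)
    (θ : En n → ℂ) (hθsm : ContDiff ℝ (⊤ : ℕ∞) θ) (hθc : HasCompactSupport θ)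
    (hθsupp : tsupport θ ⊆ {ξ : En n | ‖ξ - ξ0‖ < ε})
    (b : Zn n → ℂ) (hb : (Function.support b).Finite)
    (f : En n → ℂ)
    (hf : f = fun x => (∑' ν : Zn n, b ν * e2πi (dotE (intVec ν) x)) * invFT θ x) :
    (∀ (μ : Zn n) (x : En n),
        mulOp (fun ξ => κ (ξ - ξ0 - intVec μ)) f x =
          b μ * e2πi (dotE (intVec μ) x) * invFT θ x) ∧
    LpNormE p volume (fun x : En n =>
        lqNorm q (fun μ : Zn n =>
          (‖mulOp (fun ξ => κ (ξ - ξ0 - intVec μ)) f x‖₊ : ℝ≥0∞)))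
      = seqLq q b * eLpNorm (invFT θ) p volume := by
  classical
  -- abbreviations
  set κμf : Zn n → En n → ℂ := fun μ ξ => κ (ξ - ξ0 - intVec μ) with hκμf
  have hκμ_sm : ∀ μ : Zn n, ContDiff ℝ (⊤ : ℕ∞) (κμf μ) := fun μ =>
    hκsm.comp ((contDiff_id.sub contDiff_const).sub contDiff_const)
  have hκμ_cont : ∀ μ : Zn n, Continuous (κμf μ) := fun μ => (hκμ_sm μ).continuous
  have hκμ_supp : ∀ μ : Zn n, HasCompactSupport (κμf μ) := by
    intro μ
    have h1 := shift_compact κ hκc (ξ0 + intVec μ)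
    have : κμf μ = fun ξ => κ (ξ - (ξ0 + intVec μ)) := by
      funext ξ; rw [hκμf]; simp only; rw [sub_sub]
    rw [this]
    exact h1
  have hθν_sm : ∀ ν : Zn n, ContDiff ℝ (⊤ : ℕ∞) (fun ξ => θ (ξ - intVec ν)) := fun ν =>
    shift_smooth θ hθsm _
  have hθν_c : ∀ ν : Zn n, HasCompactSupport (fun ξ => θ (ξ - intVec ν)) := fun ν =>
    shift_compact θ hθc _
  set s := hb.toFinset with hs
  have hb_zero : ∀ ν : Zn n, ν ∉ s → b ν = 0 := by
    intro ν hν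
    simpa [hs, Function.mem_support] using hν
  have hfy : ∀ y, f y = ∑ ν ∈ s, b ν * invFT (fun ξ => θ (ξ - intVec ν)) y := by
    intro y
    rw [hf]
    show (∑' ν : Zn n, b ν * e2πi (dotE (intVec ν) y)) * invFT θ y = _
    rw [tsum_eq_sum (s := s) (fun ν hν => by rw [hb_zero ν hν, zero_mul]), Finset.sum_mul]
    refine Finset.sum_congr rfl fun ν _ => ?_
    rw [invFT_translate, dotE_comm]
    ring
  -- Part 1
  have key1 : ∀ (μ : Zn n) (x : En n),
      mulOp (fun ξ => κ (ξ - ξ0 - intVec μ)) f x =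
        b μ * e2πi (dotE (intVec μ) x) * invFT θ x := by
    intro μ x
    have hbd : ∀ y, ‖invFT (κμf μ) (x - y)‖ ≤ ∫ ξ, ‖κμf μ ξ‖ := fun y => norm_invFT_le _ _
    have hcont_shift : Continuous fun y => invFT (κμf μ) (x - y) := by
      have h1 : Continuous (invFT (κμf μ)) := by
        rw [invFT_coe_schwartz (κμf μ) (hκμ_sm μ) (hκμ_supp μ)]
        exact SchwartzMap.continuous _
      exact h1.comp (continuous_const.sub continuous_id)
    have hint : ∀ ν : Zn n,
        Integrable (fun y => invFT (κμf μ) (x - y) * invFT (fun ξ => θ (ξ - intVec ν)) y) := by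
      intro ν
      have hIθ : Integrable (invFT (fun ξ => θ (ξ - intVec ν))) := by
        rw [invFT_coe_schwartz _ (hθν_sm ν) (hθν_c ν)]
        exact SchwartzMap.integrable _
      exact hIθ.bdd_mul hcont_shift.aestronglyMeasurable (Filter.Eventually.of_forall hbd)
    have hmain : mulOp (κμf μ) f x =
        b μ * e2πi (dotE (intVec μ) x) * invFT θ x := by
      calc mulOp (κμf μ) f x
          = ∫ y, invFT (κμf μ) (x - y) * f y := rfl
        _ = ∫ y, ∑ ν ∈ s, b ν *
              (invFT (κμf μ) (x - y) * invFT (fun ξ => θ (ξ - intVec ν)) y) := by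
            congr 1; funext y
            rw [hfy y, Finset.mul_sum]
            exact Finset.sum_congr rfl fun ν _ => by ring
        _ = ∑ ν ∈ s, b ν *
              ∫ y, invFT (κμf μ) (x - y) * invFT (fun ξ => θ (ξ - intVec ν)) y := by
            rw [integral_finset_sum _ (fun ν _ => (hint ν).const_mul (b ν))]
            exact Finset.sum_congr rfl fun ν _ => integral_const_mul _ _
        _ = ∑ ν ∈ s, b ν *
              invFT (fun ξ => κμf μ ξ * θ (ξ - intVec ν)) x := by
            refine Finset.sum_congr rfl fun ν _ => ?_
            rw [conv_key (κμf μ) _ (hκμ_cont μ) (hκμ_supp μ) (hθν_sm ν) (hθν_c ν) x]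
        _ = ∑ ν ∈ s, b ν *
              (if ν = μ then e2πi (dotE x (intVec μ)) * invFT θ x else 0) := by
            refine Finset.sum_congr rfl fun ν _ => ?_
            congr 1
            by_cases hνμ : ν = μ
            · rw [if_pos hνμ, hνμ]
              have hfun : (fun ξ => κμf μ ξ * θ (ξ - intVec μ)) =
                  fun ξ => θ (ξ - intVec μ) := by
                funext ξ
                by_cases h0 : θ (ξ - intVec μ) = 0
                · rw [h0, mul_zero]
                · have hmem : ξ - intVec μ ∈ tsupport θ :=
                    subset_tsupport θ (Function.mem_support.mpr h0)
                  have hlt : ‖(ξ - intVec μ) - ξ0‖ < ε := hθsupp hmem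
                  have h1 : κ ((ξ - intVec μ) - ξ0) = 1 := hκ1 _ (by linarith)
                  rw [hκμf]
                  simp only
                  rw [show ξ - ξ0 - intVec μ = ξ - intVec μ - ξ0 from sub_right_comm _ _ _,
                    h1, one_mul]
              rw [hfun, invFT_translate]
            · rw [if_neg hνμ]
              have hfun : (fun ξ => κμf μ ξ * θ (ξ - intVec ν)) = fun _ : En n => (0 : ℂ) := by
                funext ξ
                by_cases h0 : θ (ξ - intVec ν) = 0
                · rw [h0, mul_zero]
                · have hmem : ξ - intVec ν ∈ tsupport θ :=
                    subset_tsupport θ (Function.mem_support.mpr h0)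
                  have hlt : ‖(ξ - intVec ν) - ξ0‖ < ε := hθsupp hmem
                  have hne : μ - ν ≠ (0 : Zn n) := sub_ne_zero.mpr (Ne.symm hνμ)
                  have h2 := hκ0 ((ξ - intVec ν) - ξ0) (by linarith) (μ - ν) hne
                  have harg : (ξ - intVec ν - ξ0) - intVec (μ - ν) = ξ - ξ0 - intVec μ := by
                    rw [intVec_sub]
                    abel
                  rw [harg] at h2
                  rw [hκμf]
                  simp only
                  rw [h2, zero_mul]
              rw [hfun]
              exact invFT_zero_fun x
        _ = b μ * e2πi (dotE (intVec μ) x) * invFT θ x := by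
            simp_rw [mul_ite, mul_zero]
            rw [Finset.sum_ite_eq' s μ]
            by_cases hμs : μ ∈ s
            · rw [if_pos hμs, dotE_comm]
              ring
            · rw [if_neg hμs, hb_zero μ hμs]
              ring
    exact hmain
  refine ⟨key1, ?_⟩
  -- Part 2
  have hq0 : q ≠ 0 := hq.ne'
  have hp0 : p ≠ 0 := hp.ne'
  have hpt : ∀ x : En n,
      lqNorm q (fun μ : Zn n =>
        (‖mulOp (fun ξ => κ (ξ - ξ0 - intVec μ)) f x‖₊ : ℝ≥0∞)) =
      seqLq q b * (‖invFT θ x‖₊ : ℝ≥0∞) := by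
    intro x
    have heq : (fun μ : Zn n =>
        (‖mulOp (fun ξ => κ (ξ - ξ0 - intVec μ)) f x‖₊ : ℝ≥0∞)) =
        fun μ : Zn n => ((‖b μ‖₊ : ℝ≥0∞)) * (‖invFT θ x‖₊ : ℝ≥0∞) := by
      funext μ
      rw [key1 μ x]
      rw [nnnorm_mul, nnnorm_mul, nnnorm_e2πi, mul_one, ENNReal.coe_mul]
    rw [heq, lqNorm_mul_const q hq0]
    rfl
  simp_rw [hpt]
  rw [LpNormE_const_mul p hp0 _ (seqLq_ne_top q hq0 b hb), LpNormE_nnnorm_eq p hp0]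

end LatticeBump
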